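/- Let N = {1,...,d} and let ω be a real-valued function on ordered coalitions (pairs (S, π) with S ⊆ N and π an ordering of S). Define the Sanchez-Bergantiños value φ^SB_i(ω) = Σ_{S ⊆ N\{i}} Σ_{π ∈ Ord(S)} Σ_{k=1}^{|S|+1} [(d−|S|−1)! / (d! · (|S|+1))] · [ω(π with i inserted at position k) − ω(π)]. Define the averaged characteristic function ν̄(S) = (1/|S|!) Σ_{π ∈ Ord(S)} ω(π) for all S ⊆ N. Then φ^SB_i(ω) equals the Shapley value of player i in the game (N, ν̄), i.e., φ^SB_i(ω) = Σ_{S ⊆ N\{i}} [(d−|S|−1)! · |S|! / d!] · [ν̄(S ∪ {i}) − ν̄(S)]. -/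

import Mathlib

open Finset Nat

/-- The set of orderings of a finite set `S`: lists that enumerate `S` without repetition. -/
def Orderings (S : Finset ℕ) : Finset (List ℕ) := (S.sort (· ≤ ·)).permutations.toFinset

/-- The Sanchez-Bergantiños value of player `i` for a payoff `ω` on ordered coalitions
of `N = {1,…,d}` (insertion positions are 1-indexed). -/
noncomputable def SBvalue (d : ℕ) (ω : List ℕ → ℝ) (i : ℕ) : ℝ :=
  ∑ S ∈ ((Finset.Icc 1 d).erase i).powerset, ∑ π ∈ Orderings S,
    ∑ k ∈ Finset.Icc 1 (S.card + 1),
      (((d - S.card - 1)! : ℝ) / (d ! * (S.card + 1))) * (ω (π.insertIdx (k - 1) i) - ω π)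

/-- The averaged characteristic function `ν̄(S) = (1/|S|!) Σ_{π ∈ Ord(S)} ω(π)`. -/
noncomputable def avgGame (ω : List ℕ → ℝ) (S : Finset ℕ) : ℝ :=
  (1 / (S.card ! : ℝ)) * ∑ π ∈ Orderings S, ω π

lemma mem_Orderings {S : Finset ℕ} {l : List ℕ} :
    l ∈ Orderings S ↔ l.Nodup ∧ l.toFinset = S := by
  rw [Orderings, List.mem_toFinset, List.mem_permutations]
  constructor
  · intro h
    refine ⟨h.nodup_iff.mpr (S.sort_nodup _), ?_⟩
    rw [List.toFinset_eq_of_perm _ _ h, Finset.sort_toFinset]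
  · rintro ⟨h1, h2⟩
    exact List.perm_of_nodup_nodup_toFinset_eq h1 (S.sort_nodup _)
      (by rw [h2, Finset.sort_toFinset])

lemma length_of_mem_Orderings {S : Finset ℕ} {l : List ℕ} (h : l ∈ Orderings S) :
    l.length = S.card := by
  rw [mem_Orderings] at h
  rw [← h.2, List.toFinset_card_of_nodup h.1]

lemma insertIdx_indexOf {σ : List ℕ} {i : ℕ} (h : i ∈ σ) :
    (σ.eraseIdx (σ.idxOf i)).insertIdx (σ.idxOf i) i = σ := by
  induction σ with
  | nil => cases h
  | cons a t ih =>
    by_cases hia : i = a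
    · subst hia; simp [List.idxOf_cons_self]
    · rw [List.mem_cons] at h
      have hit : i ∈ t := h.resolve_left hia
      rw [List.idxOf_cons_ne _ (Ne.symm hia)]
      simpa [List.eraseIdx, List.insertIdx_succ_cons] using ih hit

lemma indexOf_insertIdx {π : List ℕ} {i : ℕ} (hi : i ∉ π) :
    ∀ {n : ℕ}, n ≤ π.length → (π.insertIdx n i).idxOf i = n := by
  induction π with
  | nil =>
    intro n hn
    have hn0 : n = 0 := by simpa using hn
    subst hn0
    simp
  | cons a t ih =>
    intro n hn
    cases n with
    | zero => simp
    | succ m =>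
      have hia : i ≠ a := fun h => hi (h ▸ List.mem_cons_self (a := a) (l := t))
      have hit : i ∉ t := fun h => hi (List.mem_cons_of_mem _ h)
      rw [List.insertIdx_succ_cons, List.idxOf_cons_ne _ (Ne.symm hia),
        ih hit (Nat.le_of_succ_le_succ hn)]

lemma key_bij (S : Finset ℕ) (i : ℕ) (hi : i ∉ S) (ω : List ℕ → ℝ) :
    ∑ π ∈ Orderings S, ∑ k ∈ Finset.Icc 1 (S.card + 1), ω (π.insertIdx (k - 1) i)
      = ∑ σ ∈ Orderings (insert i S), ω σ := by
  rw [← Finset.sum_product']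
  refine Finset.sum_nbij' (fun p => p.1.insertIdx (p.2 - 1) i)
    (fun σ => (σ.eraseIdx (σ.idxOf i), σ.idxOf i + 1)) ?_ ?_ ?_ ?_ ?_
  · rintro ⟨π, k⟩ hp
    rw [Finset.mem_product] at hp
    obtain ⟨hπ, hk⟩ := hp
    rw [Finset.mem_Icc] at hk
    have hlen : π.length = S.card := length_of_mem_Orderings hπ
    have hkle : k - 1 ≤ π.length := by omega
    have hperm := List.perm_insertIdx i π hkle
    rw [mem_Orderings] at hπ ⊢
    have hiπ : i ∉ π := fun h => hi (hπ.2 ▸ List.mem_toFinset.mpr h)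
    refine ⟨hperm.nodup_iff.mpr (List.nodup_cons.mpr ⟨hiπ, hπ.1⟩), ?_⟩
    rw [List.toFinset_eq_of_perm _ _ hperm, List.toFinset_cons, hπ.2]
  · intro σ hσ
    rw [mem_Orderings] at hσ
    have hiσ : i ∈ σ := List.mem_toFinset.mp (hσ.2 ▸ Finset.mem_insert_self i S)
    have hlt : σ.idxOf i < σ.length := List.idxOf_lt_length_iff.mpr hiσ
    have hlen : σ.length = S.card + 1 := by
      rw [← List.toFinset_card_of_nodup hσ.1, hσ.2, Finset.card_insert_of_notMem hi]
    have hround := insertIdx_indexOf hiσ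
    have hlenE : (σ.eraseIdx (σ.idxOf i)).length + 1 = σ.length :=
      List.length_eraseIdx_add_one hlt
    have hperm : σ.Perm (i :: σ.eraseIdx (σ.idxOf i)) := by
      conv_lhs => rw [← hround]
      exact List.perm_insertIdx i _ (by omega)
    rw [Finset.mem_product, Finset.mem_Icc]
    constructor
    · rw [mem_Orderings]
      have hnd := hperm.nodup_iff.mp hσ.1
      rw [List.nodup_cons] at hnd
      refine ⟨hnd.2, ?_⟩
      have hins : insert i (σ.eraseIdx (σ.idxOf i)).toFinset = insert i S := by
        rw [← List.toFinset_cons, ← List.toFinset_eq_of_perm _ _ hperm, hσ.2]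
      have hiE : i ∉ (σ.eraseIdx (σ.idxOf i)).toFinset :=
        fun h => hnd.1 (List.mem_toFinset.mp h)
      rw [← Finset.erase_insert hiE, hins, Finset.erase_insert hi]
    · exact ⟨Nat.le_add_left 1 _, hlen ▸ hlt⟩
  · rintro ⟨π, k⟩ hp
    rw [Finset.mem_product] at hp
    obtain ⟨hπ, hk⟩ := hp
    rw [Finset.mem_Icc] at hk
    have hlen : π.length = S.card := length_of_mem_Orderings hπ
    have hkle : k - 1 ≤ π.length := by omega
    rw [mem_Orderings] at hπ
    have hiπ : i ∉ π := fun h => hi (hπ.2 ▸ List.mem_toFinset.mpr h)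
    have hidx := indexOf_insertIdx hiπ hkle
    simp only [hidx, List.eraseIdx_insertIdx_self, Prod.mk.injEq]
    exact ⟨trivial, by omega⟩
  · intro σ hσ
    rw [mem_Orderings] at hσ
    have hiσ : i ∈ σ := List.mem_toFinset.mp (hσ.2 ▸ Finset.mem_insert_self i S)
    simpa using insertIdx_indexOf hiσ
  · rintro ⟨π, k⟩ _; rfl

/-- The SB value equals the Shapley value of the averaged game `ν̄`. -/
theorem stmt4 (d : ℕ) (ω : List ℕ → ℝ) (i : ℕ) (hi : i ∈ Finset.Icc 1 d) :
    SBvalue d ω i =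
      ∑ S ∈ ((Finset.Icc 1 d).erase i).powerset,
        (((d - S.card - 1)! * S.card ! : ℝ) / d !) *
          (avgGame ω (insert i S) - avgGame ω S) := by
  rw [SBvalue]
  refine Finset.sum_congr rfl fun S hS => ?_
  have hiS : i ∉ S := fun h =>
    (Finset.notMem_erase i _) (Finset.mem_powerset.mp hS h)
  have hcard : (insert i S).card = S.card + 1 := Finset.card_insert_of_notMem hiS
  have hT := key_bij S i hiS ω
  have h2 : ∑ π ∈ Orderings S, ∑ k ∈ Finset.Icc 1 (S.card + 1), ω π
      = ((S.card : ℝ) + 1) * ∑ π ∈ Orderings S, ω π := by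
    simp [Finset.sum_const, Nat.card_Icc, ← Finset.sum_mul, mul_comm]
  simp_rw [mul_sub, Finset.sum_sub_distrib, ← Finset.mul_sum]
  rw [hT, h2, avgGame, avgGame, hcard]
  have h1 : ((S.card + 1)! : ℝ) = (S.card + 1) * S.card ! := by
    push_cast [Nat.factorial_succ]; ring
  have hd : (d ! : ℝ) ≠ 0 := Nat.cast_ne_zero.mpr (Nat.factorial_ne_zero d)
  have hsf : (S.card ! : ℝ) ≠ 0 := Nat.cast_ne_zero.mpr (Nat.factorial_ne_zero S.card)
  have hs1 : ((S.card : ℝ) + 1) ≠ 0 := by positivity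
  rw [h1]
  field_simp
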